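/- Let F ⊆ G be prime lattice filters of an MV-algebra L. Then F ⊸ G = J_u(F, K(G)) ⊸ G. -/
import Mathlib


/-- An MV-algebra: a commutative monoid `(L, ⊕, 0)` with a unary `¬` satisfying
`¬¬x = x`, `x ⊕ ¬0 = ¬0` and `¬(¬x ⊕ y) ⊕ y = ¬(¬y ⊕ x) ⊕ x`. -/
class MV (L : Type*) where
  add : L → L → L
  zero : L
  neg : L → L
  add_assoc : ∀ x y z : L, add (add x y) z = add x (add y z)
  add_comm : ∀ x y : L, add x y = add y x
  add_zero : ∀ x : L, add x zero = x
  neg_neg : ∀ x : L, neg (neg x) = x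
  add_neg_zero : ∀ x : L, add x (neg zero) = neg zero
  luk : ∀ x y : L, add (neg (add (neg x) y)) y = add (neg (add (neg y) x)) x

namespace MV

variable {L : Type*} [MV L]

/-- `1 = ¬0`. -/
def one : L := neg zero

/-- `x → y = ¬x ⊕ y`. -/
def imp (x y : L) : L := add (neg x) y

/-- `x ⊗ y = ¬(¬x ⊕ ¬y)`. -/
def otimes (x y : L) : L := neg (add (neg x) (neg y))

/-- `x ∨ y = (x → y) → y`. -/
def join (x y : L) : L := imp (imp x y) y

/-- `x ∧ y = ¬(¬x ∨ ¬y)`. -/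
def meet (x y : L) : L := neg (join (neg x) (neg y))

/-- `x ≤ y` iff `x → y = 1`. -/
def le (x y : L) : Prop := imp x y = one

/-- `x < y` iff `x ≤ y` and `x ≠ y`. -/
def lt (x y : L) : Prop := le x y ∧ x ≠ y

/-- A lattice filter: nonempty, upward closed, closed under `∧`. -/
def IsLatticeFilter (F : Set L) : Prop :=
  F.Nonempty ∧ (∀ x y : L, x ∈ F → le x y → y ∈ F) ∧
    (∀ x y : L, x ∈ F → y ∈ F → meet x y ∈ F)

/-- A prime lattice filter: a proper lattice filter such that
`x ∨ y ∈ F` implies `x ∈ F` or `y ∈ F`. -/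
def IsPrimeFilter (F : Set L) : Prop :=
  IsLatticeFilter F ∧ F ≠ Set.univ ∧ ∀ x y : L, join x y ∈ F → x ∈ F ∨ y ∈ F

/-- `F ⊸ G = {z | ∀ a ∉ G, z → a ∉ F}` (intended for `F ⊆ G`). -/
def lolli (F G : Set L) : Set L := {z | ∀ a ∉ G, imp z a ∉ F}

/-- The general `F ⊸ G = (F ∩ G) ⊸ G`. -/
def lolli' (F G : Set L) : Set L := lolli (F ∩ G) G

/-- The kernel `K(F) = {z | ∀ a ∉ F, z → a ∉ F}`. -/
def ker (F : Set L) : Set L := {z | ∀ a ∉ F, imp z a ∉ F}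

/-- `F⁺ = {z | ¬z ∉ F}`. -/
def plus (F : Set L) : Set L := {z | neg z ∉ F}

/-- An implication filter: contains `1` and is closed under modus ponens. -/
def IsImplicationFilter (P : Set L) : Prop :=
  (one : L) ∈ P ∧ ∀ x y : L, x ∈ P → imp x y ∈ P → y ∈ P

/-- `x ~_P y` iff `x → y ∈ P` and `y → x ∈ P`. -/
def simP (P : Set L) (x y : L) : Prop := imp x y ∈ P ∧ imp y x ∈ P

/-- `J_u(F, P) = {z | ∃ f ∈ F, z ~_P f}`. -/
def Ju (F P : Set L) : Set L := {z | ∃ f ∈ F, simP P z f}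

/-- `J_d(F, P) = (J_u(F⁺, P))⁺`. -/
def Jd (F P : Set L) : Set L := plus (Ju (plus F) P)

end MV

open MV

namespace MV
variable {L : Type*} [MV L]

instance : Std.Associative (MV.add : L → L → L) := ⟨MV.add_assoc⟩
instance : Std.Commutative (MV.add : L → L → L) := ⟨MV.add_comm⟩

lemma neg_add_self (x : L) : add (neg x) x = one := by
  have h := luk x (one : L)
  have h1 : add (neg x) (one : L) = one := add_neg_zero (neg x)
  have h2 : neg (one : L) = zero := neg_neg zero
  rw [h1, h2] at h
  rw [show add zero (one:L) = one from by rw [MV.add_comm, MV.add_zero],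
      show add zero x = x from by rw [MV.add_comm, MV.add_zero]] at h
  exact h.symm

lemma imp_self (x : L) : imp x x = one := neg_add_self x

lemma imp_one_eq (a : L) : imp (one : L) a = a := by
  show add (neg (neg zero)) a = a
  rw [MV.neg_neg, MV.add_comm, MV.add_zero]

lemma one_mem_ker (G : Set L) : (one : L) ∈ ker G := by
  intro a ha
  rw [imp_one_eq]; exact ha

lemma key (f z a : L) : imp f (imp z (imp (imp f (imp z a)) a)) = one := by
  show add (neg f) (add (neg z) (add (neg (add (neg f) (add (neg z) a))) a)) = one
  have h : add (neg f) (add (neg z) (add (neg (add (neg f) (add (neg z) a))) a))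
      = add (neg (add (neg f) (add (neg z) a))) (add (neg f) (add (neg z) a)) := by ac_rfl
  rw [h, neg_add_self]

end MV
/-- For prime lattice filters `F ⊆ G`,
`F ⊸ G = J_u(F, K(G)) ⊸ G`. -/
theorem stmt_12 {L : Type*} [MV L] (F G : Set L)
    (hF : IsPrimeFilter F) (hG : IsPrimeFilter G) (hFG : F ⊆ G) :
    lolli F G = lolli' (Ju F (ker G)) G := by
  ext z
  constructor
  · intro hz a ha hmem
    obtain ⟨⟨f, hf, hsim⟩, hzaG⟩ := hmem
    have ha' : imp (imp f (imp z a)) a ∉ G := hsim.2 a ha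
    have hmem' : imp z (imp (imp f (imp z a)) a) ∈ F :=
      hF.1.2.1 f _ hf (key f z a)
    exact hz _ ha' hmem'
  · intro hz a ha hmemF
    refine hz a ha ⟨⟨imp z a, hmemF, ?_, ?_⟩, hFG hmemF⟩
    · rw [MV.imp_self]; exact one_mem_ker G
    · rw [MV.imp_self]; exact one_mem_ker G
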